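/- For every ε > 0 there exists m_0 such that for all m ≥ m_0 the following holds: for every function B : [M]^N → {0,1} with Pr_{X∼U}[B(X) = f_Surj(X)] ≥ 0.92, one has Pr_{X∼U}[B(X)=1] − Pr_{Z∼D}[B(Z)=1] ≥ 0.022 − ε. -/

import Mathlib

namespace GLN

noncomputable section

open Finset

/-- `M = 2^m`. -/
def MM (m : ℕ) : ℕ := 2 ^ m

/-- `N = ⌈M · m · ln 2⌉`. -/
def NN (m : ℕ) : ℕ := ⌈(MM m : ℝ) * m * Real.log 2⌉₊

/-- Strings `X ∈ [M]^N`. -/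
abbrev Str (m : ℕ) := Fin (NN m) → Fin (MM m)

/-- The uniform probability mass function on `[M]^N`. -/
def umass (m : ℕ) (_X : Str m) : ℝ := 1 / (MM m : ℝ) ^ NN m

/-- The image `Im(X) ⊆ [M]` of a string, as a finset. -/
def img {m : ℕ} (X : Str m) : Finset (Fin (MM m)) := Finset.image X Finset.univ

/-- Transition kernel of `D_y(X)`: each coordinate with `x_i = y` is replaced by a uniform
independent sample from `[M] \ {y}`; other coordinates are unchanged. -/
def kerDy (m : ℕ) (y : Fin (MM m)) (X Z : Str m) : ℝ :=
  ∏ i, if X i = y then (if Z i = y then 0 else 1 / ((MM m : ℝ) - 1))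
       else (if Z i = X i then 1 else 0)

/-- Transition kernel of `D(X)`: choose `y` uniformly in `[M]`, then apply `D_y`. -/
def kerD (m : ℕ) (X Z : Str m) : ℝ := (1 / (MM m : ℝ)) * ∑ y, kerDy m y X Z

/-- The probability mass function of the distribution `D = D(U)`. -/
def dmass (m : ℕ) (Z : Str m) : ℝ := ∑ X, umass m X * kerD m X Z

/-- Transition kernel of `D_y^inv(Z)`: each coordinate is independently replaced by `y`
with probability `1/M` and left unchanged otherwise. -/
def kerDinvy (m : ℕ) (y : Fin (MM m)) (Z W : Str m) : ℝ :=
  ∏ i, ((1 / (MM m : ℝ)) * (if W i = y then 1 else 0)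
        + (1 - 1 / (MM m : ℝ)) * (if W i = Z i then 1 else 0))

/-- Transition kernel of `D^inv(Z)`: choose `y` uniformly in `[M] \ Im(Z)`,
then apply `D_y^inv`. -/
def kerDinv (m : ℕ) (Z W : Str m) : ℝ :=
  (1 / (((img Z)ᶜ.card : ℝ))) * ∑ y ∈ (img Z)ᶜ, kerDinvy m y Z W

/-- Probability of an event under a mass function. -/
def pr {m : ℕ} (μ : Str m → ℝ) (E : Set (Str m)) : ℝ := ∑ X, E.indicator μ X

/-- Expectation of a real function under a mass function. -/
def ev {m : ℕ} (μ : Str m → ℝ) (g : Str m → ℝ) : ℝ := ∑ X, μ X * g X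

/-- The surjectivity function `f_Surj`. -/
def fSurjB (m : ℕ) (X : Str m) : Bool := decide (img X = Finset.univ)

/-- The `q.2`-th bit of the binary encoding of coordinate `x_{q.1}` of `X`;
this realizes `X` as a string of `n = N·m` bits. -/
def bit {m : ℕ} (X : Str m) (q : Fin (NN m) × Fin m) : Bool :=
  Nat.testBit (X q.1).val q.2.val


section Aux
open Filter


/-- cast of binomial coefficient to ℤ -/
def C (n j : ℕ) : ℤ := (n.choose j : ℤ)

lemma pas (n k : ℕ) : C (n+1) (k+1) = C n k + C n (k+1) := by
  unfold C; exact_mod_cast Nat.choose_succ_succ' n k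

lemma pas1 (n : ℕ) : C (n+1) 1 = C n 0 + C n 1 := pas n 0
lemma pas2 (n : ℕ) : C (n+1) 2 = C n 1 + C n 2 := pas n 1
lemma pas3 (n : ℕ) : C (n+1) 3 = C n 2 + C n 3 := pas n 2
lemma pas4 (n : ℕ) : C (n+1) 4 = C n 3 + C n 4 := pas n 3
lemma pas5 (n : ℕ) : C (n+1) 5 = C n 4 + C n 5 := pas n 4
lemma pas6 (n : ℕ) : C (n+1) 6 = C n 5 + C n 6 := pas n 5
lemma pas7 (n : ℕ) : C (n+1) 7 = C n 6 + C n 7 := pas n 6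
lemma pas8 (n : ℕ) : C (n+1) 8 = C n 7 + C n 8 := pas n 7
lemma pas9 (n : ℕ) : C (n+1) 9 = C n 8 + C n 9 := pas n 8

lemma czero (n : ℕ) : C n 0 = 1 := by simp [C]

/-- induction helper -/
lemma indNonneg (f d : ℕ → ℤ) (a : ℕ) (hb : 0 ≤ f a)
    (hstep : ∀ n, a ≤ n → f (n+1) = f n + d n)
    (hd : ∀ n, a ≤ n → 0 ≤ d n) : ∀ n, a ≤ n → 0 ≤ f n := by
  intro n hn
  induction n with
  | zero => rwa [Nat.le_zero.mp hn] at hb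
  | succ k ih =>
    rcases Nat.lt_or_ge k a with h | h
    · have : a = k + 1 := le_antisymm hn h
      rwa [← this]
    · rw [hstep k h]; exact add_nonneg (ih h) (hd k h)

def P0 (n : ℕ) : ℤ := C n 4 - 3*C n 5 + 6*C n 6 - 10*C n 7 + 21*C n 8 + 70*C n 9 - ((n:ℤ) - 3)
def P1 (n : ℕ) : ℤ := C n 3 - 3*C n 4 + 6*C n 5 - 10*C n 6 + 21*C n 7 + 70*C n 8 - 1
def P2 (n : ℕ) : ℤ := C n 2 - 3*C n 3 + 6*C n 4 - 10*C n 5 + 21*C n 6 + 70*C n 7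
def P3 (n : ℕ) : ℤ := C n 1 - 3*C n 2 + 6*C n 3 - 10*C n 4 + 21*C n 5 + 70*C n 6
def P4 (n : ℕ) : ℤ := 1 - 3*C n 1 + 6*C n 2 - 10*C n 3 + 21*C n 4 + 70*C n 5
def P5 (n : ℕ) : ℤ := -3 + 6*C n 1 - 10*C n 2 + 21*C n 3 + 70*C n 4
def P6 (n : ℕ) : ℤ := 6 - 10*C n 1 + 21*C n 2 + 70*C n 3
def P7 (n : ℕ) : ℤ := -10 + 21*C n 1 + 70*C n 2

lemma stepP0 (n : ℕ) : P0 (n+1) = P0 n + P1 n := by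
  simp only [P0, P1, pas4, pas5, pas6, pas7, pas8, pas9]; push_cast; ring
lemma stepP1 (n : ℕ) : P1 (n+1) = P1 n + P2 n := by
  simp only [P1, P2, pas3, pas4, pas5, pas6, pas7, pas8]; ring
lemma stepP2 (n : ℕ) : P2 (n+1) = P2 n + P3 n := by
  simp only [P2, P3, pas2, pas3, pas4, pas5, pas6, pas7]; ring
lemma stepP3 (n : ℕ) : P3 (n+1) = P3 n + P4 n := by
  simp only [P3, P4, pas1, pas2, pas3, pas4, pas5, pas6, czero]; ring
lemma stepP4 (n : ℕ) : P4 (n+1) = P4 n + P5 n := by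
  simp only [P4, P5, pas1, pas2, pas3, pas4, pas5, czero]; ring
lemma stepP5 (n : ℕ) : P5 (n+1) = P5 n + P6 n := by
  simp only [P5, P6, pas1, pas2, pas3, pas4, czero]; ring
lemma stepP6 (n : ℕ) : P6 (n+1) = P6 n + P7 n := by
  simp only [P6, P7, pas1, pas2, pas3, czero]; ring

lemma hP7 : ∀ n, 1 ≤ n → 0 ≤ P7 n := by
  intro n hn
  have : (1:ℤ) ≤ (n.choose 1 : ℤ) := by simp [Nat.choose_one_right]; exact_mod_cast hn
  have h2 : (0:ℤ) ≤ (n.choose 2 : ℤ) := by positivity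
  simp only [P7, C]; nlinarith
lemma hP6 : ∀ n, 2 ≤ n → 0 ≤ P6 n :=
  indNonneg P6 P7 2 (by decide) (fun n _ => stepP6 n) (fun n hn => hP7 n (by omega))
lemma hP5 : ∀ n, 3 ≤ n → 0 ≤ P5 n :=
  indNonneg P5 P6 3 (by decide) (fun n _ => stepP5 n) (fun n hn => hP6 n (by omega))
lemma hP4 : ∀ n, 4 ≤ n → 0 ≤ P4 n :=
  indNonneg P4 P5 4 (by decide) (fun n _ => stepP4 n) (fun n hn => hP5 n (by omega))
lemma hP3 : ∀ n, 5 ≤ n → 0 ≤ P3 n :=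
  indNonneg P3 P4 5 (by decide) (fun n _ => stepP3 n) (fun n hn => hP4 n (by omega))
lemma hP2 : ∀ n, 6 ≤ n → 0 ≤ P2 n :=
  indNonneg P2 P3 6 (by decide) (fun n _ => stepP2 n) (fun n hn => hP3 n (by omega))
lemma hP1 : ∀ n, 7 ≤ n → 0 ≤ P1 n :=
  indNonneg P1 P2 7 (by decide) (fun n _ => stepP1 n) (fun n hn => hP2 n (by omega))
lemma hP0 : ∀ n, 0 ≤ P0 n := by
  intro n
  rcases Nat.lt_or_ge n 8 with h | h
  · interval_cases n <;> decide
  · exact indNonneg P0 P1 7 (by decide) (fun n _ => stepP0 n)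
      (fun n hn => hP1 n hn) n (by omega)

/-- the key pointwise majorant inequality -/
lemma ptP (n : ℕ) : ((n:ℤ) - 3 ≤ C n 4 - 3*C n 5 + 6*C n 6 - 10*C n 7 + 21*C n 8 + 70*C n 9)
    ∧ (0 ≤ C n 4 - 3*C n 5 + 6*C n 6 - 10*C n 7 + 21*C n 8 + 70*C n 9) := by
  have h0 := hP0 n
  unfold P0 at h0
  constructor
  · linarith
  · rcases Nat.lt_or_ge n 4 with h | h
    · interval_cases n <;> decide
    · have : (4:ℤ) ≤ (n:ℤ) := by exact_mod_cast h
      linarith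



def Q0 (n : ℕ) : ℤ := C n 1 - C n 2 + C n 3 - C n 4 + C n 5 - C n 6 + C n 7 - 1
def Q1 (n : ℕ) : ℤ := 1 - C n 1 + C n 2 - C n 3 + C n 4 - C n 5 + C n 6
def Q2 (n : ℕ) : ℤ := -1 + C n 1 - C n 2 + C n 3 - C n 4 + C n 5
def Q3 (n : ℕ) : ℤ := 1 - C n 1 + C n 2 - C n 3 + C n 4
def Q4 (n : ℕ) : ℤ := -1 + C n 1 - C n 2 + C n 3
def Q5 (n : ℕ) : ℤ := 1 - C n 1 + C n 2
def Q6 (n : ℕ) : ℤ := -1 + C n 1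

lemma stepQ0 (n : ℕ) : Q0 (n+1) = Q0 n + Q1 n := by
  simp only [Q0, Q1, pas1, pas2, pas3, pas4, pas5, pas6, pas7, czero]; ring
lemma stepQ1 (n : ℕ) : Q1 (n+1) = Q1 n + Q2 n := by
  simp only [Q1, Q2, pas1, pas2, pas3, pas4, pas5, pas6, czero]; ring
lemma stepQ2 (n : ℕ) : Q2 (n+1) = Q2 n + Q3 n := by
  simp only [Q2, Q3, pas1, pas2, pas3, pas4, pas5, czero]; ring
lemma stepQ3 (n : ℕ) : Q3 (n+1) = Q3 n + Q4 n := by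
  simp only [Q3, Q4, pas1, pas2, pas3, pas4, czero]; ring
lemma stepQ4 (n : ℕ) : Q4 (n+1) = Q4 n + Q5 n := by
  simp only [Q4, Q5, pas1, pas2, pas3, czero]; ring
lemma stepQ5 (n : ℕ) : Q5 (n+1) = Q5 n + Q6 n := by
  simp only [Q5, Q6, pas1, pas2, czero]; ring

lemma hQ6 : ∀ n, 1 ≤ n → 0 ≤ Q6 n := by
  intro n hn; simp only [Q6, C, Nat.choose_one_right]; omega
lemma hQ5 : ∀ n, 1 ≤ n → 0 ≤ Q5 n :=
  indNonneg Q5 Q6 1 (by decide) (fun n _ => stepQ5 n) hQ6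
lemma hQ4 : ∀ n, 1 ≤ n → 0 ≤ Q4 n :=
  indNonneg Q4 Q5 1 (by decide) (fun n _ => stepQ4 n) hQ5
lemma hQ3 : ∀ n, 1 ≤ n → 0 ≤ Q3 n :=
  indNonneg Q3 Q4 1 (by decide) (fun n _ => stepQ3 n) hQ4
lemma hQ2 : ∀ n, 1 ≤ n → 0 ≤ Q2 n :=
  indNonneg Q2 Q3 1 (by decide) (fun n _ => stepQ2 n) hQ3
lemma hQ1 : ∀ n, 1 ≤ n → 0 ≤ Q1 n :=
  indNonneg Q1 Q2 1 (by decide) (fun n _ => stepQ1 n) hQ2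
lemma hQ0 : ∀ n, 1 ≤ n → 0 ≤ Q0 n :=
  indNonneg Q0 Q1 1 (by decide) (fun n _ => stepQ0 n) hQ1

/-- pointwise: indicator(n ≥ 1) ≤ L(n), and 0 ≤ L(n) -/
lemma ptL (n : ℕ) : (1 ≤ n → 1 ≤ C n 1 - C n 2 + C n 3 - C n 4 + C n 5 - C n 6 + C n 7)
    ∧ 0 ≤ C n 1 - C n 2 + C n 3 - C n 4 + C n 5 - C n 6 + C n 7 := by
  constructor
  · intro hn; have := hQ0 n hn; unfold Q0 at this; linarith
  · rcases Nat.eq_zero_or_pos n with h | h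
    · subst h; decide
    · have := hQ0 n h; unfold Q0 at this; linarith


lemma MM_pos (m : ℕ) : 0 < MM m := Nat.pow_pos (by norm_num)

lemma card_str (m : ℕ) : Fintype.card (Str m) = MM m ^ NN m := by
  simp [Fintype.card_fun]

lemma sum_umass (m : ℕ) : ∑ Z : Str m, umass m Z = 1 := by
  have h : ((MM m : ℝ)) ^ NN m ≠ 0 := by
    have := MM_pos m; positivity
  simp only [umass]
  rw [Finset.sum_const, card_univ, card_str, nsmul_eq_mul]
  push_cast
  field_simp

/-- number of strings avoiding a set T -/
lemma card_avoid (m : ℕ) (T : Finset (Fin (MM m))) :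
    (univ.filter (fun Z : Str m => T ⊆ (img Z)ᶜ)).card = (MM m - T.card) ^ NN m := by
  have hset : (univ.filter (fun Z : Str m => T ⊆ (img Z)ᶜ)) =
      Fintype.piFinset (fun _ : Fin (NN m) => Tᶜ) := by
    ext Z
    simp only [mem_filter, mem_univ, true_and, Fintype.mem_piFinset, Finset.mem_compl]
    constructor
    · intro h i hi
      have h2 := h hi
      rw [Finset.mem_compl] at h2
      exact h2 (by simp [img])
    · intro h x hx
      rw [Finset.mem_compl]
      intro hximg
      simp only [img, Finset.mem_image, mem_univ, true_and] at hximg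
      obtain ⟨i, hi⟩ := hximg
      exact h i (hi ▸ hx)
  rw [hset, Fintype.card_piFinset]
  simp [Finset.card_compl]

/-- moment identity in ℕ -/
lemma moment_nat (m : ℕ) (j : ℕ) :
    ∑ Z : Str m, ((img Z)ᶜ.card.choose j) = (MM m).choose j * (MM m - j) ^ NN m := by
  have h1 : ∀ Z : Str m, ((img Z)ᶜ.card.choose j) =
      ((powersetCard j univ).filter (fun T => T ⊆ (img Z)ᶜ)).card := by
    intro Z
    rw [← Finset.card_powersetCard]
    congr 1
    ext T
    simp only [mem_powersetCard, mem_filter]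
    constructor
    · intro ⟨h1, h2⟩; exact ⟨⟨subset_univ T, h2⟩, h1⟩
    · intro ⟨⟨_, h2⟩, h1⟩; exact ⟨h1, h2⟩
  simp only [h1, Finset.card_filter]
  rw [Finset.sum_comm]
  have h2 : ∀ T ∈ powersetCard j (univ : Finset (Fin (MM m))),
      (∑ Z : Str m, if T ⊆ (img Z)ᶜ then 1 else 0) = (MM m - j) ^ NN m := by
    intro T hT
    rw [← Finset.card_filter, card_avoid]
    rw [mem_powersetCard] at hT
    rw [hT.2]
  rw [Finset.sum_congr rfl h2, Finset.sum_const, Finset.card_powersetCard, card_univ,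
    Fintype.card_fin, smul_eq_mul]

/-- real moment identity -/
lemma moment_real (m : ℕ) (j : ℕ) (hj : j ≤ MM m) :
    ∑ Z : Str m, umass m Z * (((img Z)ᶜ.card.choose j : ℕ) : ℝ) =
      ((MM m).choose j : ℝ) * (((MM m : ℝ) - j) / (MM m : ℝ)) ^ NN m := by
  have hM : (0:ℝ) < (MM m : ℝ) := by exact_mod_cast MM_pos m
  have hMN : (0:ℝ) < ((MM m : ℝ)) ^ NN m := by positivity
  have hcast : ((MM m - j : ℕ) : ℝ) = (MM m : ℝ) - j := by
    push_cast [Nat.cast_sub hj]; ring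
  have := moment_nat m j
  have hreal : ∑ Z : Str m, (((img Z)ᶜ.card.choose j : ℕ) : ℝ) =
      ((MM m).choose j : ℝ) * ((MM m : ℝ) - j) ^ NN m := by
    rw [← hcast]
    exact_mod_cast congrArg (Nat.cast : ℕ → ℝ) this
  simp only [umass]
  rw [← Finset.mul_sum, hreal, div_pow]
  field_simp


def cst (m : ℕ) : ℝ := (1/(MM m:ℝ)) * ((MM m : ℝ)/((MM m : ℝ) - 1)) ^ NN m

lemma two_le_MM (m : ℕ) (hm : 1 ≤ m) : 2 ≤ MM m := by
  calc 2 = 2^1 := rfl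
  _ ≤ 2^m := Nat.pow_le_pow_right (by norm_num) hm
lemma two_le_MMr (m : ℕ) (hm : 1 ≤ m) : (2:ℝ) ≤ (MM m : ℝ) := by exact_mod_cast two_le_MM m hm

lemma sum_kerDy (m : ℕ) (hm : 1 ≤ m) (y : Fin (MM m)) (Z : Str m) :
    ∑ X : Str m, kerDy m y X Z =
      if y ∈ img Z then 0 else ((MM m : ℝ)/((MM m : ℝ) - 1)) ^ NN m := by
  have ha : (1:ℝ) < (MM m : ℝ) := lt_of_lt_of_le (by norm_num) (two_le_MMr m hm)
  have ha1 : (MM m : ℝ) - 1 ≠ 0 := by linarith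
  set a : ℝ := (MM m : ℝ) with hadef
  set F : Fin (NN m) → Fin (MM m) → ℝ := fun i x =>
    if x = y then (if Z i = y then 0 else 1 / (a - 1))
    else (if Z i = x then 1 else 0) with hF
  have hker : ∀ X : Str m, kerDy m y X Z = ∏ i, F i (X i) := by
    intro X; rfl
  simp only [hker]
  have hswap := Finset.prod_univ_sum (fun _ : Fin (NN m) => (univ : Finset (Fin (MM m)))) F
  rw [Fintype.piFinset_univ] at hswap
  rw [← hswap]
  have hcol : ∀ i : Fin (NN m), ∑ x, F i x = if Z i = y then 0 else a/(a-1) := by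
    intro i
    rw [← Finset.add_sum_erase _ _ (Finset.mem_univ y)]
    have h1 : F i y = if Z i = y then 0 else 1/(a-1) := by simp [hF]
    have h2 : ∑ x ∈ univ.erase y, F i x = if Z i = y then 0 else 1 := by
      have : ∀ x ∈ univ.erase y, F i x = if Z i = x then 1 else 0 := by
        intro x hx
        have : x ≠ y := (Finset.mem_erase.mp hx).1
        simp [hF, this]
      rw [Finset.sum_congr rfl this, Finset.sum_ite_eq]
      by_cases h : Z i = y
      · simp [h]
      · simp [Finset.mem_erase, h]
    rw [h1, h2]
    by_cases h : Z i = y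
    · simp [h]
    · simp only [h, if_false]
      field_simp
      ring
  rw [Finset.prod_congr rfl (fun i _ => hcol i)]
  by_cases hy : y ∈ img Z
  · simp only [hy, if_true]
    obtain ⟨i, _, hi⟩ := Finset.mem_image.mp hy
    exact Finset.prod_eq_zero (Finset.mem_univ i) (by simp [hi])
  · simp only [hy, if_false]
    have : ∀ i : Fin (NN m), Z i ≠ y := by
      intro i hi
      exact hy (Finset.mem_image.mpr ⟨i, Finset.mem_univ i, hi⟩)
    rw [Finset.prod_congr rfl (fun i (_ : i ∈ univ) => if_neg (this i)), Finset.prod_const,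
      card_univ, Fintype.card_fin]

lemma dmass_eq (m : ℕ) (hm : 1 ≤ m) (Z : Str m) :
    dmass m Z = ((img Z)ᶜ.card : ℝ) * cst m * umass m Z := by
  simp only [dmass, kerD, umass, ← Finset.mul_sum]
  have hswap : ∑ X : Str m, ∑ y, kerDy m y X Z = ∑ y, ∑ X : Str m, kerDy m y X Z :=
    Finset.sum_comm
  rw [hswap]
  have : ∀ y, ∑ X : Str m, kerDy m y X Z =
      if y ∈ img Z then 0 else ((MM m : ℝ)/((MM m : ℝ) - 1)) ^ NN m :=
    fun y => sum_kerDy m hm y Z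
  rw [Finset.sum_congr rfl (fun y _ => this y)]
  have h2 : ∑ y, (if y ∈ img Z then (0:ℝ) else ((MM m : ℝ)/((MM m : ℝ) - 1)) ^ NN m) =
      ((img Z)ᶜ.card : ℝ) * ((MM m : ℝ)/((MM m : ℝ) - 1)) ^ NN m := by
    have : ∀ y : Fin (MM m), (if y ∈ img Z then (0:ℝ) else ((MM m : ℝ)/((MM m : ℝ) - 1)) ^ NN m)
        = (if y ∈ (img Z)ᶜ then ((MM m : ℝ)/((MM m : ℝ) - 1)) ^ NN m else 0) := by
      intro y
      by_cases h : y ∈ img Z <;> simp [h]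
    rw [Finset.sum_congr rfl (fun y _ => this y), Finset.sum_ite_mem,
      Finset.univ_inter, Finset.sum_const, nsmul_eq_mul]
  rw [h2, cst]
  ring



def Sj (m j : ℕ) : ℝ := ((MM m).choose j : ℝ) * (((MM m : ℝ) - j) / (MM m : ℝ)) ^ NN m
def tj (j m : ℕ) : ℝ := j * m * Real.log 2 + (NN m : ℝ) * Real.log (((MM m : ℝ) - j) / (MM m : ℝ))

lemma MM_cast (m : ℕ) : (MM m : ℝ) = (2:ℝ)^m := by push_cast [MM]; ring

lemma MM_ge (j m : ℕ) (hm : j + 1 ≤ m) : 2*j ≤ MM m := by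
  have h1 : j < 2^j := Nat.lt_two_pow_self
  have h2 : (2:ℕ)^j ≤ 2^(m-1) := Nat.pow_le_pow_right (by norm_num) (by omega)
  have h3 : 2 * 2^(m-1) = 2^m := by
    rw [← pow_succ']
    congr 1
    omega
  calc 2*j ≤ 2*2^j := by omega
  _ ≤ 2*2^(m-1) := by omega
  _ = 2^m := h3

lemma tj_le (j m : ℕ) (hj : 1 ≤ j) (hm : j + 1 ≤ m) :
    tj j m ≤ 0 ∧
    -((2*(j:ℝ)^2*Real.log 2) * m * (1/2:ℝ)^m + 2*j*(1/2)^m) ≤ tj j m := by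
  have hL2 : 0 < Real.log 2 := Real.log_pos (by norm_num)
  set a : ℝ := (MM m : ℝ) with hadef
  have h2j : 2*(j:ℝ) ≤ a := by
    rw [hadef]
    exact_mod_cast MM_ge j m hm
  have hj1 : (1:ℝ) ≤ (j:ℝ) := by exact_mod_cast hj
  have ha : 0 < a := by linarith
  have hajpos : 0 < a - j := by linarith
  have hfrac : 0 < (a - j)/a := by positivity
  have hlog1 : Real.log ((a-j)/a) ≤ -((j:ℝ)/a) := by
    have h := Real.log_le_sub_one_of_pos hfrac
    have heq : (a-j)/a - 1 = -((j:ℝ)/a) := by field_simp; ring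
    linarith [heq ▸ h]
  have hlog2 : -((j:ℝ)/(a-j)) ≤ Real.log ((a-j)/a) := by
    have h := Real.log_le_sub_one_of_pos (show 0 < a/(a-j) by positivity)
    have heq : Real.log ((a-j)/a) = - Real.log (a/(a-j)) := by
      rw [← Real.log_inv, inv_div]
    have heq2 : a/(a-j) - 1 = (j:ℝ)/(a-j) := by field_simp; ring
    rw [heq]; linarith [heq2 ▸ h]
  have hN1 : a * m * Real.log 2 ≤ (NN m : ℝ) := by
    simpa [NN, hadef] using Nat.le_ceil (a * m * Real.log 2)
  have hamL2 : 0 ≤ a * m * Real.log 2 := by positivity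
  have hN2 : (NN m : ℝ) ≤ a * m * Real.log 2 + 1 := by
    have := Nat.ceil_lt_add_one hamL2
    simp only [NN, hadef]
    exact le_of_lt this
  have hNn : (0:ℝ) ≤ (NN m : ℝ) := Nat.cast_nonneg _
  have hhalf : ((1:ℝ)/2)^m = 1/a := by
    rw [hadef, MM_cast, div_pow, one_pow]
  constructor
  · have u1 : (NN m : ℝ) * Real.log ((a-j)/a) ≤ (NN m : ℝ) * (-((j:ℝ)/a)) :=
      mul_le_mul_of_nonneg_left hlog1 hNn
    have hjan : -((j:ℝ)/a) ≤ 0 := by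
      have : 0 ≤ (j:ℝ)/a := by positivity
      linarith
    have u2 : (NN m : ℝ) * (-((j:ℝ)/a)) ≤ (a*m*Real.log 2) * (-((j:ℝ)/a)) :=
      mul_le_mul_of_nonpos_right hN1 hjan
    have u3 : (a*m*Real.log 2) * (-((j:ℝ)/a)) = -((j:ℝ)*m*Real.log 2) := by
      field_simp
    unfold tj
    rw [← hadef]
    linarith
  · have l1 : (NN m : ℝ) * (-((j:ℝ)/(a-j))) ≤ (NN m : ℝ) * Real.log ((a-j)/a) :=
      mul_le_mul_of_nonneg_left hlog2 hNn
    have l2 : (a*m*Real.log 2 + 1) * (-((j:ℝ)/(a-j))) ≤ (NN m : ℝ) * (-((j:ℝ)/(a-j))) := by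
      apply mul_le_mul_of_nonpos_right hN2
      have : 0 ≤ (j:ℝ)/(a-j) := by positivity
      linarith
    have key : (j:ℝ)*m*Real.log 2 + (a*m*Real.log 2 + 1) * (-((j:ℝ)/(a-j)))
        = -((j:ℝ)*((j:ℝ)*m*Real.log 2+1)/(a-j)) := by
      field_simp
      ring
    have hinv : 1/(a-j) ≤ 2/a := by
      rw [div_le_div_iff₀ hajpos ha]
      linarith
    have comp : (j:ℝ)*((j:ℝ)*m*Real.log 2+1)/(a-j)
        ≤ (2*(j:ℝ)^2*Real.log 2) * m * (1/a) + 2*j*(1/a) := by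
      have hnum : 0 ≤ (j:ℝ)*((j:ℝ)*m*Real.log 2+1) := by positivity
      have h1 : (j:ℝ)*((j:ℝ)*m*Real.log 2+1)/(a-j) = ((j:ℝ)*((j:ℝ)*m*Real.log 2+1)) * (1/(a-j)) := by
        ring
      have h2 : ((j:ℝ)*((j:ℝ)*m*Real.log 2+1)) * (1/(a-j)) ≤ ((j:ℝ)*((j:ℝ)*m*Real.log 2+1)) * (2/a) :=
        mul_le_mul_of_nonneg_left hinv hnum
      have h3 : ((j:ℝ)*((j:ℝ)*m*Real.log 2+1)) * (2/a) = (2*(j:ℝ)^2*Real.log 2) * m * (1/a) + 2*j*(1/a) := by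
        field_simp
      linarith [h1 ▸ h2, h3 ▸ h2]
    unfold tj
    rw [← hadef, hhalf]
    linarith

lemma tendsto_tj (j : ℕ) (hj : 1 ≤ j) : Tendsto (tj j) atTop (nhds 0) := by
  have hgeom : Tendsto (fun m : ℕ => (m:ℝ) * (1/2:ℝ)^m) atTop (nhds 0) := by
    have h := (summable_pow_mul_geometric_of_norm_lt_one 1
      (r := (1/2:ℝ)) (by rw [Real.norm_eq_abs]; rw [abs_of_pos]; norm_num; norm_num)).tendsto_atTop_zero
    simpa using h
  have hgeom0 : Tendsto (fun m : ℕ => ((1:ℝ)/2)^m) atTop (nhds 0) :=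
    tendsto_pow_atTop_nhds_zero_of_lt_one (by norm_num) (by norm_num)
  have hlo : Tendsto (fun m : ℕ =>
      -((2*(j:ℝ)^2*Real.log 2) * m * (1/2:ℝ)^m + 2*j*(1/2:ℝ)^m)) atTop (nhds 0) := by
    have h := ((hgeom.const_mul (2*(j:ℝ)^2*Real.log 2)).add (hgeom0.const_mul (2*(j:ℝ)))).neg
    simp only [mul_zero, add_zero, neg_zero] at h
    apply h.congr
    intro m
    ring
  apply tendsto_of_tendsto_of_tendsto_of_le_of_le' hlo tendsto_const_nhds
  · filter_upwards [eventually_ge_atTop (j+1)] with m hm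
    exact (tj_le j m hj hm).2
  · filter_upwards [eventually_ge_atTop (j+1)] with m hm
    exact (tj_le j m hj hm).1

lemma tendsto_MM : Tendsto (fun m : ℕ => (MM m : ℝ)) atTop atTop := by
  have h := tendsto_pow_atTop_atTop_of_one_lt (r := (2:ℝ)) (by norm_num)
  apply h.congr
  intro m
  rw [MM_cast]

lemma tendsto_Sj (j : ℕ) (hj : 1 ≤ j) :
    Tendsto (fun m => Sj m j) atTop (nhds (1/(j.factorial : ℝ))) := by
  have hprod : Tendsto (fun m : ℕ => ∏ i ∈ range j, (1 - (i:ℝ)/(MM m : ℝ))) atTop (nhds 1) := by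
    have h1 : ∀ i ∈ range j, Tendsto (fun m : ℕ => 1 - (i:ℝ)/(MM m : ℝ)) atTop (nhds 1) := by
      intro i _
      have h2 := (tendsto_const_nhds (x := (i:ℝ)) (f := atTop)).div_atTop tendsto_MM
      simpa using tendsto_const_nhds.sub h2
    have := tendsto_finset_prod (range j) h1
    simpa using this
  have hexp : Tendsto (fun m => Real.exp (tj j m)) atTop (nhds 1) := by
    have := (Real.continuous_exp.tendsto 0).comp (tendsto_tj j hj)
    simpa [Function.comp_def] using this
  have hmain := (hprod.const_mul (1/(j.factorial:ℝ))).mul hexp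
  simp only [mul_one] at hmain
  apply hmain.congr'
  filter_upwards [eventually_ge_atTop (j+1)] with m hm
  -- show (1/j!) * ∏ (1 - i/a) * exp (tj j m) = Sj m j
  have hL2 : 0 < Real.log 2 := Real.log_pos (by norm_num)
  set a : ℝ := (MM m : ℝ) with hadef
  have h2j : 2*(j:ℝ) ≤ a := by rw [hadef]; exact_mod_cast MM_ge j m hm
  have hj1 : (1:ℝ) ≤ (j:ℝ) := by exact_mod_cast hj
  have ha : 0 < a := by linarith
  have hajpos : 0 < a - j := by linarith
  have hfrac : 0 < (a - j)/a := by positivity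
  have hjM : j ≤ MM m := by
    have : (j:ℝ) ≤ a := by linarith
    rw [hadef] at this
    exact_mod_cast this
  -- descFactorial
  have hdesc : ((MM m).descFactorial j : ℝ) = ∏ i ∈ range j, (a - i) := by
    rw [Nat.descFactorial_eq_prod_range, Nat.cast_prod]
    apply Finset.prod_congr rfl
    intro i hi
    have hij : i ≤ MM m := le_trans (le_of_lt (mem_range.mp hi)) hjM
    rw [hadef]
    push_cast [Nat.cast_sub hij]
    ring
  have hchoose : ((MM m).choose j : ℝ) = (∏ i ∈ range j, (a - i)) / (j.factorial : ℝ) := by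
    have h := Nat.descFactorial_eq_factorial_mul_choose (MM m) j
    have : ((MM m).descFactorial j : ℝ) = (j.factorial : ℝ) * ((MM m).choose j : ℝ) := by
      exact_mod_cast congrArg (Nat.cast : ℕ → ℝ) h
    rw [hdesc] at this
    have hfac : (j.factorial : ℝ) ≠ 0 := by positivity
    field_simp
    linarith [this]
  have hprodeq : ∏ i ∈ range j, (a - i) = a^j * ∏ i ∈ range j, (1 - (i:ℝ)/a) := by
    have hap : a ^ j = ∏ _i ∈ range j, a := by rw [Finset.prod_const, Finset.card_range]
    rw [hap, ← Finset.prod_mul_distrib]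
    apply Finset.prod_congr rfl
    intro i _
    field_simp
  have hexp_eq : Real.exp (tj j m) = a^j * ((a - j)/a)^(NN m) := by
    unfold tj
    rw [← hadef, Real.exp_add]
    congr 1
    · rw [mul_assoc, Real.exp_nat_mul, Real.exp_nat_mul,
        Real.exp_log (by norm_num : (0:ℝ) < 2), hadef, MM_cast]
    · rw [Real.exp_nat_mul, Real.exp_log hfrac]
  rw [hexp_eq]
  have hSj : Sj m j = ((MM m).choose j : ℝ) * ((a - j)/a)^(NN m) := rfl
  rw [hSj, hchoose, hprodeq]
  have hfac : (j.factorial : ℝ) ≠ 0 := by positivity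
  field_simp

lemma tendsto_cst : Tendsto cst atTop (nhds 1) := by
  have hexp : Tendsto (fun m => Real.exp (-(tj 1 m))) atTop (nhds 1) := by
    have hneg : Tendsto (fun x => -(tj 1 x)) atTop (nhds 0) := by
      simpa using (tendsto_tj 1 le_rfl).neg
    have := (Real.continuous_exp.tendsto 0).comp hneg
    simpa [Function.comp_def] using this
  apply hexp.congr'
  filter_upwards [eventually_ge_atTop 2] with m hm
  have h2j : (2:ℝ) ≤ (MM m : ℝ) := by
    have : (2*1:ℕ) ≤ MM m := MM_ge 1 m hm
    exact_mod_cast this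
  set a : ℝ := (MM m : ℝ) with hadef
  have ha : 0 < a := by linarith
  have ha1 : 0 < a - 1 := by linarith
  have hfrac : 0 < (a - 1)/a := by positivity
  have hexp_eq : Real.exp (-(tj 1 m)) = (1/a) * (a/(a-1))^(NN m) := by
    unfold tj
    rw [← hadef]
    push_cast
    rw [neg_add, Real.exp_add]
    congr 1
    · rw [one_mul, Real.exp_neg, Real.exp_nat_mul, Real.exp_log (by norm_num : (0:ℝ) < 2),
        hadef, MM_cast, one_div]
    · rw [show -((NN m:ℝ) * Real.log ((a-1)/a)) = (NN m:ℝ) * Real.log (a/(a-1)) by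
        rw [show Real.log ((a-1)/a) = -Real.log (a/(a-1)) from by rw [← Real.log_inv, inv_div]]
        ring]
      rw [Real.exp_nat_mul, Real.exp_log (by positivity : (0:ℝ) < a/(a-1))]
  rw [hexp_eq]
  have : cst m = (1/a) * (a/(a-1))^(NN m) := rfl
  rw [this]

-- now assembly
def LS (m : ℕ) : ℝ := Sj m 1 - Sj m 2 + Sj m 3 - Sj m 4 + Sj m 5 - Sj m 6 + Sj m 7
def PS (m : ℕ) : ℝ := Sj m 4 - 3*Sj m 5 + 6*Sj m 6 - 10*Sj m 7 + 21*Sj m 8 + 70*Sj m 9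

lemma Sj_eq_moment (m : ℕ) (j : ℕ) (hj : j ≤ MM m) :
    Sj m j = ∑ Z : Str m, umass m Z * (((img Z)ᶜ.card.choose j : ℕ) : ℝ) :=
  (moment_real m j hj).symm

lemma nonsurj_iff (m : ℕ) (Z : Str m) : fSurjB m Z = false ↔ 1 ≤ ((img Z)ᶜ).card := by
  rw [fSurjB, decide_eq_false_iff_not, Finset.one_le_card,
    Finset.nonempty_iff_ne_empty, ne_eq, Finset.compl_eq_empty_iff]

lemma cst_nonneg (m : ℕ) (hm : 1 ≤ m) : 0 ≤ cst m := by
  have h2 := two_le_MMr m hm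
  have h1 : (0:ℝ) < (MM m : ℝ) := by linarith
  have h3 : (0:ℝ) < (MM m : ℝ) - 1 := by linarith
  unfold cst
  positivity

lemma main_bound (m : ℕ) (hm : 4 ≤ m) (B : Str m → Bool)
    (hB : (0.92:ℝ) ≤ pr (umass m) {X : Str m | B X = fSurjB m X}) :
    0.92 - LS m - cst m * (0.24 + PS m)
      ≤ pr (umass m) {X : Str m | B X = true} - pr (dmass m) {Z : Str m | B Z = true} := by
  have hm1 : 1 ≤ m := by omega
  have h9M : 9 ≤ MM m := by
    have : (2:ℕ)^4 ≤ 2^m := Nat.pow_le_pow_right (by norm_num) hm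
    simp [MM]; omega
  have hU0 : ∀ Z : Str m, 0 ≤ umass m Z := by
    intro Z
    unfold umass
    positivity
  have hcst := cst_nonneg m hm1
  -- rewrite the three prs as explicit sums
  have hprB : pr (umass m) {X : Str m | B X = true} =
      ∑ Z : Str m, (if B Z = true then umass m Z else 0) := by
    simp [pr, Set.indicator_apply]
  have hprA : pr (umass m) {X : Str m | B X = fSurjB m X} =
      ∑ Z : Str m, (if B Z = fSurjB m Z then umass m Z else 0) := by
    simp [pr, Set.indicator_apply]
  have hprD : pr (dmass m) {Z : Str m | B Z = true} =
      ∑ Z : Str m, (if B Z = true then dmass m Z else 0) := by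
    simp [pr, Set.indicator_apply]
  set R : Str m → ℕ := fun Z => ((img Z)ᶜ).card with hRdef
  -- moments
  have hmom : ∀ j : ℕ, j ≤ 9 → ∑ Z : Str m, umass m Z * ((R Z).choose j : ℝ) = Sj m j := by
    intro j hj
    exact (Sj_eq_moment m j (by omega)).symm
  -- Step 2 : Pr[nonsurj] ≤ LS m
  have hNS : ∑ Z : Str m, (if fSurjB m Z = false then umass m Z else 0) ≤ LS m := by
    have hpt : ∀ Z : Str m, (if fSurjB m Z = false then umass m Z else 0) ≤
        umass m Z * (((C (R Z) 1 - C (R Z) 2 + C (R Z) 3 - C (R Z) 4 + C (R Z) 5 - C (R Z) 6 + C (R Z) 7 : ℤ)) : ℝ) := by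
      intro Z
      by_cases h : fSurjB m Z = false
      · rw [if_pos h]
        have h1 : 1 ≤ R Z := (nonsurj_iff m Z).mp h
        have h2 := (ptL (R Z)).1 h1
        have h2r : (1:ℝ) ≤ ((C (R Z) 1 - C (R Z) 2 + C (R Z) 3 - C (R Z) 4 + C (R Z) 5 - C (R Z) 6 + C (R Z) 7 : ℤ) : ℝ) := by
          exact_mod_cast h2
        have := mul_le_mul_of_nonneg_left h2r (hU0 Z)
        linarith
      · rw [if_neg h]
        have h2 := (ptL (R Z)).2
        have h2r : (0:ℝ) ≤ ((C (R Z) 1 - C (R Z) 2 + C (R Z) 3 - C (R Z) 4 + C (R Z) 5 - C (R Z) 6 + C (R Z) 7 : ℤ) : ℝ) := by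
          exact_mod_cast h2
        exact mul_nonneg (hU0 Z) h2r
    calc ∑ Z : Str m, (if fSurjB m Z = false then umass m Z else 0)
        ≤ ∑ Z : Str m, umass m Z * (((C (R Z) 1 - C (R Z) 2 + C (R Z) 3 - C (R Z) 4 + C (R Z) 5 - C (R Z) 6 + C (R Z) 7 : ℤ)) : ℝ) :=
          Finset.sum_le_sum (fun Z _ => hpt Z)
      _ = ∑ Z : Str m, (umass m Z * ((R Z).choose 1 : ℝ) - umass m Z * ((R Z).choose 2 : ℝ)
            + umass m Z * ((R Z).choose 3 : ℝ) - umass m Z * ((R Z).choose 4 : ℝ)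
            + umass m Z * ((R Z).choose 5 : ℝ) - umass m Z * ((R Z).choose 6 : ℝ)
            + umass m Z * ((R Z).choose 7 : ℝ)) := by
          apply Finset.sum_congr rfl
          intro Z _
          simp only [C]
          push_cast
          ring
      _ = LS m := by
          simp only [Finset.sum_add_distrib, Finset.sum_sub_distrib]
          rw [hmom 1 (by norm_num), hmom 2 (by norm_num), hmom 3 (by norm_num),
            hmom 4 (by norm_num), hmom 5 (by norm_num), hmom 6 (by norm_num),
            hmom 7 (by norm_num)]
          rfl
  -- agreement ≤ 1
  have hA1 : ∑ Z : Str m, (if B Z = fSurjB m Z then umass m Z else 0) ≤ 1 := by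
    rw [← sum_umass m]
    apply Finset.sum_le_sum
    intro Z _
    by_cases h : B Z = fSurjB m Z <;> simp [h, hU0 Z]
  -- Step 1 : prB lower bound
  have hStep1 : (∑ Z : Str m, (if B Z = fSurjB m Z then umass m Z else 0))
      - (∑ Z : Str m, (if fSurjB m Z = false then umass m Z else 0))
      ≤ ∑ Z : Str m, (if B Z = true then umass m Z else 0) := by
    rw [← Finset.sum_sub_distrib]
    apply Finset.sum_le_sum
    intro Z _
    cases hBz : B Z <;> cases hFz : fSurjB m Z <;> simp [hBz, hFz, hU0 Z]
  -- Step 3 : prD upper bound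
  have hStep3 : (∑ Z : Str m, (if B Z = true then dmass m Z else 0)) ≤ cst m * (0.24 + PS m) := by
    have hd : ∀ Z : Str m, (if B Z = true then dmass m Z else 0)
        = cst m * (if B Z = true then (R Z : ℝ) * umass m Z else 0) := by
      intro Z
      by_cases h : B Z = true
      · rw [if_pos h, if_pos h, dmass_eq m hm1 Z]
        ring
      · simp [h]
    rw [Finset.sum_congr rfl (fun Z _ => hd Z), ← Finset.mul_sum]
    apply mul_le_mul_of_nonneg_left _ hcst
    -- ∑ (if B then R*U else 0) ≤ 0.24 + PS m
    have hptw : ∀ Z : Str m, (if B Z = true then (R Z : ℝ) * umass m Z else 0)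
        ≤ 3 * (if B Z = fSurjB m Z then 0 else umass m Z)
          + umass m Z * (((C (R Z) 4 - 3*C (R Z) 5 + 6*C (R Z) 6 - 10*C (R Z) 7 + 21*C (R Z) 8 + 70*C (R Z) 9 : ℤ)) : ℝ) := by
      intro Z
      have hPnn : (0:ℝ) ≤ ((C (R Z) 4 - 3*C (R Z) 5 + 6*C (R Z) 6 - 10*C (R Z) 7 + 21*C (R Z) 8 + 70*C (R Z) 9 : ℤ) : ℝ) := by
        exact_mod_cast (ptP (R Z)).2
      have hPub : ((R Z : ℝ)) - 3 ≤ ((C (R Z) 4 - 3*C (R Z) 5 + 6*C (R Z) 6 - 10*C (R Z) 7 + 21*C (R Z) 8 + 70*C (R Z) 9 : ℤ) : ℝ) := by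
        exact_mod_cast (ptP (R Z)).1
      by_cases hb : B Z = true
      · rw [if_pos hb]
        rcases Nat.eq_zero_or_pos (R Z) with h0 | h1
        · have hz : ((R Z : ℝ)) * umass m Z = 0 := by rw [h0]; simp
          have h3 : (0:ℝ) ≤ 3 * (if B Z = fSurjB m Z then 0 else umass m Z) := by
            by_cases h : B Z = fSurjB m Z <;> simp [h, hU0 Z]
          linarith [mul_nonneg (hU0 Z) hPnn]
        · have hsurj : fSurjB m Z = false := (nonsurj_iff m Z).mpr h1
          have hdis : ¬ (B Z = fSurjB m Z) := by rw [hb, hsurj]; simp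
          rw [if_neg hdis]
          have := mul_le_mul_of_nonneg_left hPub (hU0 Z)
          nlinarith [hU0 Z]
      · rw [if_neg hb]
        have h3 : (0:ℝ) ≤ 3 * (if B Z = fSurjB m Z then 0 else umass m Z) := by
          by_cases h : B Z = fSurjB m Z <;> simp [h, hU0 Z]
        linarith [mul_nonneg (hU0 Z) hPnn]
    calc ∑ Z : Str m, (if B Z = true then (R Z : ℝ) * umass m Z else 0)
        ≤ ∑ Z : Str m, (3 * (if B Z = fSurjB m Z then 0 else umass m Z)
          + umass m Z * (((C (R Z) 4 - 3*C (R Z) 5 + 6*C (R Z) 6 - 10*C (R Z) 7 + 21*C (R Z) 8 + 70*C (R Z) 9 : ℤ)) : ℝ)) :=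
          Finset.sum_le_sum (fun Z _ => hptw Z)
      _ = 3 * (1 - ∑ Z : Str m, (if B Z = fSurjB m Z then umass m Z else 0))
          + ∑ Z : Str m, (umass m Z * ((R Z).choose 4 : ℝ) - 3 * (umass m Z * ((R Z).choose 5 : ℝ))
            + 6 * (umass m Z * ((R Z).choose 6 : ℝ)) - 10 * (umass m Z * ((R Z).choose 7 : ℝ))
            + 21 * (umass m Z * ((R Z).choose 8 : ℝ)) + 70 * (umass m Z * ((R Z).choose 9 : ℝ))) := by
          rw [Finset.sum_add_distrib]
          congr 1
          · rw [← Finset.mul_sum]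
            congr 1
            have : ∀ Z : Str m, (if B Z = fSurjB m Z then (0:ℝ) else umass m Z)
                = umass m Z - (if B Z = fSurjB m Z then umass m Z else 0) := by
              intro Z
              by_cases h : B Z = fSurjB m Z <;> simp [h]
            rw [Finset.sum_congr rfl (fun Z _ => this Z), Finset.sum_sub_distrib, sum_umass m]
          · apply Finset.sum_congr rfl
            intro Z _
            simp only [C]
            push_cast
            ring
      _ ≤ 0.24 + PS m := by
          have h1 : ∑ Z : Str m, (umass m Z * ((R Z).choose 4 : ℝ) - 3 * (umass m Z * ((R Z).choose 5 : ℝ))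
            + 6 * (umass m Z * ((R Z).choose 6 : ℝ)) - 10 * (umass m Z * ((R Z).choose 7 : ℝ))
            + 21 * (umass m Z * ((R Z).choose 8 : ℝ)) + 70 * (umass m Z * ((R Z).choose 9 : ℝ))) = PS m := by
            simp only [Finset.sum_add_distrib, Finset.sum_sub_distrib, ← Finset.mul_sum]
            rw [hmom 4 (by norm_num), hmom 5 (by norm_num), hmom 6 (by norm_num),
              hmom 7 (by norm_num), hmom 8 (by norm_num), hmom 9 (by norm_num)]
            rfl
          rw [h1]
          have h2 : (0.92:ℝ) ≤ ∑ Z : Str m, (if B Z = fSurjB m Z then umass m Z else 0) := by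
            rw [← hprA]; exact hB
          linarith
  -- combine
  have hB' : (0.92:ℝ) ≤ ∑ Z : Str m, (if B Z = fSurjB m Z then umass m Z else 0) := by
    rw [← hprA]; exact hB
  rw [hprB, hprD]
  linarith [hNS, hStep1, hStep3, hB']


end Aux

/-- for every `ε > 0` and all sufficiently large `m`, every Boolean function
`B` agreeing with `f_Surj` on at least a `0.92` fraction of inputs (under `U`) satisfies
`Pr_U[B = 1] − Pr_D[B = 1] ≥ 0.022 − ε`. -/
theorem stmt11 : ∀ ε : ℝ, 0 < ε → ∃ m0 : ℕ, ∀ m : ℕ, m0 ≤ m →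
    ∀ B : Str m → Bool,
      (0.92 : ℝ) ≤ pr (umass m) {X : Str m | B X = fSurjB m X} →
      (0.022 : ℝ) - ε ≤
        pr (umass m) {X : Str m | B X = true} - pr (dmass m) {Z : Str m | B Z = true} := by
  intro ε hε
  have hG : Filter.Tendsto (fun m => 0.92 - LS m - cst m * (0.24 + PS m)) Filter.atTop
      (nhds (0.92 - (1/(Nat.factorial 1 : ℝ) - 1/(Nat.factorial 2 : ℝ) + 1/(Nat.factorial 3 : ℝ)
        - 1/(Nat.factorial 4 : ℝ) + 1/(Nat.factorial 5 : ℝ) - 1/(Nat.factorial 6 : ℝ)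
        + 1/(Nat.factorial 7 : ℝ))
        - 1 * (0.24 + (1/(Nat.factorial 4 : ℝ) - 3*(1/(Nat.factorial 5 : ℝ))
          + 6*(1/(Nat.factorial 6 : ℝ)) - 10*(1/(Nat.factorial 7 : ℝ))
          + 21*(1/(Nat.factorial 8 : ℝ)) + 70*(1/(Nat.factorial 9 : ℝ)))))) := by
    have h1 := tendsto_Sj 1 (by norm_num)
    have h2 := tendsto_Sj 2 (by norm_num)
    have h3 := tendsto_Sj 3 (by norm_num)
    have h4 := tendsto_Sj 4 (by norm_num)
    have h5 := tendsto_Sj 5 (by norm_num)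
    have h6 := tendsto_Sj 6 (by norm_num)
    have h7 := tendsto_Sj 7 (by norm_num)
    have h8 := tendsto_Sj 8 (by norm_num)
    have h9 := tendsto_Sj 9 (by norm_num)
    have hc := tendsto_cst
    unfold LS PS
    apply Filter.Tendsto.sub
    · apply Filter.Tendsto.sub tendsto_const_nhds
      exact ((((((h1.sub h2).add h3).sub h4).add h5).sub h6).add h7)
    · exact hc.mul (tendsto_const_nhds.add
        ((((((h4.sub ((tendsto_const_nhds (x := (3:ℝ))).mul h5)).add
          ((tendsto_const_nhds (x := (6:ℝ))).mul h6)).sub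
          ((tendsto_const_nhds (x := (10:ℝ))).mul h7)).add
          ((tendsto_const_nhds (x := (21:ℝ))).mul h8)).add
          ((tendsto_const_nhds (x := (70:ℝ))).mul h9))))
  have hlim : (0.022:ℝ) < 0.92 - (1/(Nat.factorial 1 : ℝ) - 1/(Nat.factorial 2 : ℝ) + 1/(Nat.factorial 3 : ℝ)
        - 1/(Nat.factorial 4 : ℝ) + 1/(Nat.factorial 5 : ℝ) - 1/(Nat.factorial 6 : ℝ)
        + 1/(Nat.factorial 7 : ℝ))
        - 1 * (0.24 + (1/(Nat.factorial 4 : ℝ) - 3*(1/(Nat.factorial 5 : ℝ))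
          + 6*(1/(Nat.factorial 6 : ℝ)) - 10*(1/(Nat.factorial 7 : ℝ))
          + 21*(1/(Nat.factorial 8 : ℝ)) + 70*(1/(Nat.factorial 9 : ℝ)))) := by
    norm_num [Nat.factorial]
  have hev : ∀ᶠ m in Filter.atTop, (0.022:ℝ) < 0.92 - LS m - cst m * (0.24 + PS m) :=
    hG.eventually (eventually_gt_nhds hlim)
  rcases (hev.and (Filter.eventually_ge_atTop 4)).exists_forall_of_atTop with ⟨m0, hm0⟩
  refine ⟨m0, fun m hm B hB => ?_⟩
  obtain ⟨hGm, hm4⟩ := hm0 m hm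
  have := main_bound m hm4 B hB
  linarith


end
end GLN
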